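/- Let d ≥ 1 be a natural number and let G be a simple graph on n ≥ 3 vertices with average degree at most d (i.e. 2·e(G) ≤ d·n). Let k be a natural number with (k + d + 5)·(4d + 6) ≤ n. If H is any simple graph on n vertices that shares at least n − k common cards with G, then G and H have the same number of edges: e(G) = e(H). -/

import Mathlib

open SimpleGraph

/-- The degree of a vertex, as the cardinality of its neighbour set. -/
noncomputable def gdeg {V : Type} (G : SimpleGraph V) (v : V) : ℕ :=
  (G.neighborSet v).ncard

/-- The number of edges of a graph. -/
noncomputable def ecount {V : Type} (G : SimpleGraph V) : ℕ :=
  G.edgeSet.ncard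

/-- The card `G - v`: the induced subgraph on the complement of `v`. -/
def gcard {V : Type} (G : SimpleGraph V) (v : V) : SimpleGraph {w : V // w ≠ v} :=
  G.induce {w : V | w ≠ v}

/-- The number of vertices of degree exactly `t`. -/
noncomputable def dcount {V : Type} (G : SimpleGraph V) (t : ℕ) : ℕ :=
  {v : V | gdeg G v = t}.ncard

/-- `G` and `H` share at least `m` common cards: there are `m` vertices of `G`,
injectively matched with vertices of `H`, whose cards are pairwise isomorphic. -/
def SharesCards {n : ℕ} (G H : SimpleGraph (Fin n)) (m : ℕ) : Prop :=
  ∃ (S : Finset (Fin n)) (f : Fin n → Fin n),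
    m ≤ S.card ∧ Set.InjOn f ↑S ∧
    ∀ v ∈ S, Nonempty (gcard G v ≃g gcard H (f v))

section Helpers

open Finset

attribute [local instance] Classical.propDecidable

variable {n : ℕ}

private lemma ecount_eq_edgeFinset_card {V : Type} [Fintype V] (G : SimpleGraph V) :
    ecount G = G.edgeFinset.card := by
  rw [ecount, ← Nat.card_coe_set_eq, Nat.card_eq_fintype_card, ← Set.toFinset_card]
  congr 1

private lemma ecount_iso {V W : Type} (A : SimpleGraph V) (B : SimpleGraph W)
    (φ : A ≃g B) : ecount A = ecount B := by
  rw [ecount, ecount, ← Nat.card_coe_set_eq, ← Nat.card_coe_set_eq]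
  exact Nat.card_congr φ.mapEdgeSet

private lemma degree_iso {V W : Type} [Fintype V] [Fintype W] (A : SimpleGraph V)
    (B : SimpleGraph W) (φ : A ≃g B) (v : V) : B.degree (φ v) = A.degree v := by
  rw [← card_neighborSet_eq_degree, ← card_neighborSet_eq_degree]
  exact Fintype.card_congr (φ.mapNeighborSet v).symm

private lemma ssum_iso {V W : Type} [Fintype V] [Fintype W] (A : SimpleGraph V)
    (B : SimpleGraph W) (φ : A ≃g B) (t : ℕ) :
    ∑ v, min (A.degree v) t = ∑ w, min (B.degree w) t := by
  rw [← Equiv.sum_comp φ.toEquiv (fun w => min (B.degree w) t)]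
  exact Finset.sum_congr rfl
    (fun v _ => by rw [show φ.toEquiv v = φ v from rfl, degree_iso A B φ v])

private lemma handshake' {V : Type} [Fintype V] (G : SimpleGraph V) :
    ∑ v, G.degree v = 2 * ecount G := by
  rw [ecount_eq_edgeFinset_card]
  exact G.sum_degrees_eq_twice_card_edges

private lemma gcard_adj (G : SimpleGraph (Fin n)) (v : Fin n) (u w : {x : Fin n // x ≠ v}) :
    (gcard G v).Adj u w ↔ G.Adj ↑u ↑w := by
  simp [gcard]

private lemma gcard_degree (G : SimpleGraph (Fin n)) (v : Fin n) (u : {w : Fin n // w ≠ v}) :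
    (gcard G v).degree u = ((G.neighborFinset (↑u : Fin n)).erase v).card := by
  rw [SimpleGraph.degree]
  refine Finset.card_bij (fun w _ => (w : Fin n)) ?_ ?_ ?_
  · intro w hw
    rw [mem_neighborFinset, gcard_adj] at hw
    exact Finset.mem_erase.2 ⟨w.prop, (mem_neighborFinset _ _ _).2 hw⟩
  · intro a _ b _ h
    exact Subtype.ext h
  · intro b hb
    rw [Finset.mem_erase, mem_neighborFinset] at hb
    exact ⟨⟨b, hb.1⟩, by rw [mem_neighborFinset, gcard_adj]; exact hb.2, rfl⟩

private lemma sum_min_gcard (G : SimpleGraph (Fin n)) (v : Fin n) (t : ℕ) :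
    (∑ u : {w : Fin n // w ≠ v}, min ((gcard G v).degree u) t)
      + ((G.neighborFinset v).filter (fun u => G.degree u ≤ t)).card
      + min (G.degree v) t
    = ∑ u, min (G.degree u) t := by
  have h1 : (∑ u : {w : Fin n // w ≠ v}, min ((gcard G v).degree u) t)
      = ∑ u ∈ Finset.univ.erase v, min (((G.neighborFinset u).erase v).card) t := by
    rw [Finset.sum_subtype (p := fun w => w ≠ v) (Finset.univ.erase v)
      (by intro x; simp [Finset.mem_erase])
      (fun u => min (((G.neighborFinset u).erase v).card) t)]
    exact Finset.sum_congr rfl (fun u _ => by rw [gcard_degree])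
  have h2 : ∀ u ∈ Finset.univ.erase v,
      min (((G.neighborFinset u).erase v).card) t
        + (if G.Adj v u ∧ G.degree u ≤ t then 1 else 0)
      = min (G.degree u) t := by
    intro u hu
    by_cases hadj : G.Adj v u
    · have hmem : v ∈ G.neighborFinset u := (mem_neighborFinset _ _ _).2 hadj.symm
      have hcard : ((G.neighborFinset u).erase v).card + 1 = (G.neighborFinset u).card :=
        Finset.card_erase_add_one hmem
      have hdeg : G.degree u = (G.neighborFinset u).card := rfl
      by_cases hle : G.degree u ≤ t
      · simp only [hadj, hle, and_self, if_true]
        omega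
      · simp only [hadj, hle, and_false, if_false]
        omega
    · have he : (G.neighborFinset u).erase v = G.neighborFinset u :=
        Finset.erase_eq_of_notMem (fun h => hadj ((mem_neighborFinset _ _ _).1 h).symm)
      rw [he]
      simp [hadj]
  have h3 : ∑ u ∈ Finset.univ.erase v, min (((G.neighborFinset u).erase v).card) t
      + ∑ u ∈ Finset.univ.erase v, (if G.Adj v u ∧ G.degree u ≤ t then 1 else 0)
      = ∑ u ∈ Finset.univ.erase v, min (G.degree u) t := by
    rw [← Finset.sum_add_distrib]
    exact Finset.sum_congr rfl h2
  have hsets : (Finset.univ.erase v).filter (fun u => G.Adj v u ∧ G.degree u ≤ t)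
      = (G.neighborFinset v).filter (fun u => G.degree u ≤ t) := by
    ext u
    simp only [Finset.mem_filter, Finset.mem_erase, Finset.mem_univ, true_and,
      mem_neighborFinset]
    constructor
    · rintro ⟨hne, hadj, hle⟩; exact ⟨hadj, hle⟩
    · rintro ⟨hadj, hle⟩; exact ⟨⟨hadj.ne', trivial⟩, hadj, hle⟩
  have h4 : ∑ u ∈ Finset.univ.erase v, (if G.Adj v u ∧ G.degree u ≤ t then 1 else 0)
      = ((G.neighborFinset v).filter (fun u => G.degree u ≤ t)).card := by
    rw [← hsets, Finset.card_filter]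
  have h5 : ∑ u ∈ Finset.univ.erase v, min (G.degree u) t + min (G.degree v) t
      = ∑ u, min (G.degree u) t :=
    Finset.sum_erase_add _ _ (Finset.mem_univ v)
  linarith [h1, h3, h4, h5]

private lemma degree_le_n (G : SimpleGraph (Fin n)) (u : Fin n) : G.degree u ≤ n := by
  have := Finset.card_le_univ (G.neighborFinset u)
  simpa using this

private lemma gcard_degree_le_n (G : SimpleGraph (Fin n)) (v : Fin n)
    (u : {w : Fin n // w ≠ v}) : (gcard G v).degree u ≤ n := by
  have h1 := Finset.card_le_univ ((gcard G v).neighborFinset u)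
  have h2 : Fintype.card {w : Fin n // w ≠ v} ≤ Fintype.card (Fin n) :=
    Fintype.card_le_of_injective Subtype.val Subtype.val_injective
  simpa using le_trans h1 (by simpa using h2)

private lemma two_ecount_gcard (G : SimpleGraph (Fin n)) (v : Fin n) :
    ecount (gcard G v) + G.degree v = ecount G := by
  have hs := sum_min_gcard G v n
  have e1 : (∑ u : {w : Fin n // w ≠ v}, min ((gcard G v).degree u) n)
      = ∑ u : {w : Fin n // w ≠ v}, (gcard G v).degree u :=
    Finset.sum_congr rfl (fun u _ => min_eq_left (gcard_degree_le_n G v u))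
  have e2 : (∑ u, min (G.degree u) n) = ∑ u, G.degree u :=
    Finset.sum_congr rfl (fun u _ => min_eq_left (degree_le_n G u))
  have e3 : ((G.neighborFinset v).filter (fun u => G.degree u ≤ n)).card
      = G.degree v := by
    rw [Finset.filter_true_of_mem (fun u _ => degree_le_n G u)]
    rfl
  have e4 : min (G.degree v) n = G.degree v := min_eq_left (degree_le_n G v)
  rw [e1, e2, e3, e4, handshake', handshake'] at hs
  omega

set_option maxHeartbeats 1000000 in
private lemma core {n d k : ℕ} (hd : 1 ≤ d) (hk : (k + d + 5) * (4 * d + 6) ≤ n)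
    (G H : SimpleGraph (Fin n)) (havg : 2 * ecount G ≤ d * n)
    (S : Finset (Fin n)) (f : Fin n → Fin n) (hcard : n - k ≤ S.card)
    (hinj : Set.InjOn f ↑S)
    (hiso : ∀ v ∈ S, Nonempty (gcard G v ≃g gcard H (f v))) :
    ecount H ≤ ecount G := by
  by_contra hlt
  push_neg at hlt
  set m := ecount H - ecount G with hmdef
  have hm1 : 1 ≤ m := by omega
  have heH : ecount H = ecount G + m := by omega
  clear_value m
  set t := 2 * d + 2 + m with htdef
  clear_value t
  have hkn : k ≤ n := by
    have h1 : k ≤ (k + d + 5) * 1 := by omega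
    have h2 : (k + d + 5) * 1 ≤ (k + d + 5) * (4 * d + 6) :=
      Nat.mul_le_mul_left _ (by omega)
    omega
  have hSn : S.card ≤ n := by simpa using Finset.card_le_univ S
  have hScard : n ≤ S.card + k := by omega
  -- degree shift
  have hshift : ∀ v ∈ S, H.degree (f v) = G.degree v + m := by
    intro v hv
    obtain ⟨φ⟩ := hiso v hv
    have h1 := two_ecount_gcard G v
    have h2 := two_ecount_gcard H (f v)
    have h3 : ecount (gcard G v) = ecount (gcard H (f v)) := ecount_iso _ _ φ
    omega
  set sG := ∑ u, min (G.degree u) t with hsGdef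
  set sH := ∑ u, min (H.degree u) t with hsHdef
  set β : Fin n → ℕ :=
    fun v => ((H.neighborFinset (f v)).filter (fun u => H.degree u ≤ t)).card with hβdef
  clear_value sG sH β
  -- (B) per-vertex upper bound
  have hBv : ∀ v ∈ S, sH ≤ sG + β v + m := by
    intro v hv
    obtain ⟨φ⟩ := hiso v hv
    have h1 := sum_min_gcard G v t
    have h2 := sum_min_gcard H (f v) t
    have h3 := ssum_iso _ _ φ t
    have h4 := hshift v hv
    rw [h4] at h2
    rw [← hsGdef] at h1
    rw [← hsHdef] at h2
    have hβv : β v = ((H.neighborFinset (f v)).filter (fun u => H.degree u ≤ t)).card := by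
      simp only [hβdef]
    omega
  have hB : S.card * sH ≤ S.card * sG + (∑ v ∈ S, β v) + S.card * m := by
    calc S.card * sH = ∑ _v ∈ S, sH := by rw [Finset.sum_const, smul_eq_mul]
      _ ≤ ∑ v ∈ S, (sG + β v + m) := Finset.sum_le_sum hBv
      _ = S.card * sG + (∑ v ∈ S, β v) + S.card * m := by
          rw [Finset.sum_add_distrib, Finset.sum_add_distrib, Finset.sum_const,
            Finset.sum_const, smul_eq_mul, smul_eq_mul]
  have hβsum : (∑ v ∈ S, β v) ≤ 2 * ecount H := by
    calc (∑ v ∈ S, β v) ≤ ∑ v ∈ S, H.degree (f v) :=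
          Finset.sum_le_sum (fun v _ => by
            rw [hβdef]; exact Finset.card_filter_le _ _)
      _ = ∑ w ∈ S.image f, H.degree w := by
          rw [Finset.sum_image (fun x hx y hy hxy =>
            hinj (Finset.mem_coe.2 hx) (Finset.mem_coe.2 hy) hxy)]
      _ ≤ ∑ w, H.degree w := Finset.sum_le_sum_of_subset (Finset.subset_univ _)
      _ = 2 * ecount H := handshake' H
  -- low degree counts
  set L := (Finset.univ.filter (fun v => G.degree v ≤ 2 * d + 2)).card with hLdef
  set LS := (S.filter (fun v => G.degree v ≤ 2 * d + 2)).card with hLSdef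
  clear_value L LS
  have hLS : L ≤ LS + k := by
    have hsub : Finset.univ.filter (fun v => G.degree v ≤ 2 * d + 2)
        ⊆ (S.filter (fun v => G.degree v ≤ 2 * d + 2)) ∪ (Finset.univ \ S) := by
      intro x hx
      rw [Finset.mem_filter] at hx
      by_cases hxS : x ∈ S
      · exact Finset.mem_union_left _ (Finset.mem_filter.2 ⟨hxS, hx.2⟩)
      · exact Finset.mem_union_right _ (Finset.mem_sdiff.2 ⟨Finset.mem_univ x, hxS⟩)
    have h1 := Finset.card_le_card hsub
    have h2 := Finset.card_union_le (S.filter (fun v => G.degree v ≤ 2 * d + 2))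
      (Finset.univ \ S)
    have h3 : (Finset.univ \ S).card = n - S.card := by
      rw [Finset.card_sdiff_of_subset (Finset.subset_univ S)]
      simp
    omega
  -- (C) lower bound pieces
  have hc1 : sG ≤ (∑ v ∈ S, min (G.degree v) t) + k * t := by
    have hsplit : (∑ v ∈ Finset.univ \ S, min (G.degree v) t)
        + ∑ v ∈ S, min (G.degree v) t = sG := by
      rw [hsGdef]; exact Finset.sum_sdiff (Finset.subset_univ S)
    have h1 : (∑ v ∈ Finset.univ \ S, min (G.degree v) t) ≤ (Finset.univ \ S).card * t := by
      have := Finset.sum_le_card_nsmul (Finset.univ \ S) (fun v => min (G.degree v) t) t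
        (fun x _ => min_le_right _ _)
      simpa [smul_eq_mul] using this
    have h3 : (Finset.univ \ S).card = n - S.card := by
      rw [Finset.card_sdiff_of_subset (Finset.subset_univ S)]
      simp
    have h4 : (Finset.univ \ S).card ≤ k := by omega
    have h5 : (Finset.univ \ S).card * t ≤ k * t := Nat.mul_le_mul_right t h4
    omega
  have hc3 : (∑ v ∈ S, min (G.degree v) t) + m * LS
      ≤ ∑ v ∈ S, min (H.degree (f v)) t := by
    have hsplitG := Finset.sum_filter_add_sum_filter_not S
      (fun v => G.degree v ≤ 2 * d + 2) (fun v => min (G.degree v) t)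
    have hsplitH := Finset.sum_filter_add_sum_filter_not S
      (fun v => G.degree v ≤ 2 * d + 2) (fun v => min (H.degree (f v)) t)
    have e1 : ∑ v ∈ S.filter (fun v => G.degree v ≤ 2 * d + 2), min (H.degree (f v)) t
        = (∑ v ∈ S.filter (fun v => G.degree v ≤ 2 * d + 2), min (G.degree v) t)
          + m * LS := by
      have hptwise : ∀ v ∈ S.filter (fun v => G.degree v ≤ 2 * d + 2),
          min (H.degree (f v)) t = min (G.degree v) t + m := by
        intro v hv
        rw [Finset.mem_filter] at hv
        rw [hshift v hv.1]
        omega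
      rw [Finset.sum_congr rfl hptwise, Finset.sum_add_distrib, Finset.sum_const,
        smul_eq_mul, hLSdef]
      ring
    have e2 : ∑ v ∈ S.filter (fun v => ¬ (G.degree v ≤ 2 * d + 2)), min (G.degree v) t
        ≤ ∑ v ∈ S.filter (fun v => ¬ (G.degree v ≤ 2 * d + 2)), min (H.degree (f v)) t := by
      refine Finset.sum_le_sum (fun v hv => ?_)
      rw [Finset.mem_filter] at hv
      rw [hshift v hv.1]
      omega
    linarith [hsplitG, hsplitH, e1, e2]
  have hc4 : (∑ v ∈ S, min (H.degree (f v)) t) ≤ sH := by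
    calc (∑ v ∈ S, min (H.degree (f v)) t)
        = ∑ w ∈ S.image f, min (H.degree w) t := by
          rw [Finset.sum_image (fun x hx y hy hxy =>
            hinj (Finset.mem_coe.2 hx) (Finset.mem_coe.2 hy) hxy)]
      _ ≤ ∑ w, min (H.degree w) t := Finset.sum_le_sum_of_subset (Finset.subset_univ _)
      _ = sH := hsHdef.symm
  have hC : sG + m * L ≤ sH + k * t + m * k := by
    have h6 : m * L ≤ m * LS + m * k := by
      calc m * L ≤ m * (LS + k) := Nat.mul_le_mul_left m hLS
        _ = m * LS + m * k := by ring
    linarith [hc1, hc3, hc4, h6]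
  -- degree mass bound: (d+3) n ≤ (2d+3) L
  have hLbound : (d + 3) * n ≤ (2 * d + 3) * L := by
    set Q := Finset.univ.filter (fun v => ¬ (G.degree v ≤ 2 * d + 2)) with hQdef
    have hq : L + Q.card = n := by
      rw [hLdef, hQdef, Finset.card_filter_add_card_filter_not]
      simp
    have hq2 : Q.card * (2 * d + 3) ≤ ∑ v ∈ Q, G.degree v := by
      have := Finset.card_nsmul_le_sum Q (fun v => G.degree v) (2 * d + 3)
        (fun x hx => by
          rw [hQdef, Finset.mem_filter] at hx
          show 2 * d + 3 ≤ G.degree x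
          omega)
      simpa [smul_eq_mul] using this
    have hq3 : (∑ v ∈ Q, G.degree v) ≤ 2 * ecount G := by
      calc (∑ v ∈ Q, G.degree v) ≤ ∑ v, G.degree v :=
            Finset.sum_le_sum_of_subset (Finset.subset_univ _)
        _ = 2 * ecount G := handshake' G
    have hexp : (2 * d + 3) * n = (2 * d + 3) * L + Q.card * (2 * d + 3) := by
      have hh : (2 * d + 3) * (L + Q.card) = (2 * d + 3) * L + Q.card * (2 * d + 3) := by
        ring
      rw [hq] at hh
      exact hh
    linarith [hexp, hq2, hq3, havg]
  have hL2 : 2 * (d + 3) * (k + d + 5) ≤ L := by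
    have h7 : (d + 3) * ((k + d + 5) * (4 * d + 6)) ≤ (d + 3) * n :=
      Nat.mul_le_mul_left _ hk
    have h8 : (2 * d + 3) * (2 * (d + 3) * (k + d + 5))
        = (d + 3) * ((k + d + 5) * (4 * d + 6)) := by ring
    have h9 : (2 * d + 3) * (2 * (d + 3) * (k + d + 5)) ≤ (2 * d + 3) * L := by
      rw [h8]; exact le_trans h7 hLbound
    exact Nat.le_of_mul_le_mul_left h9 (by omega)
  -- assemble main inequality
  have hMain0 : S.card * (sG + m * L) ≤ S.card * (sH + k * t + m * k) :=
    Nat.mul_le_mul_left _ hC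
  have hMain : S.card * (m * L)
      ≤ 2 * ecount G + 2 * m + S.card * m + S.card * (k * t) + S.card * (m * k) := by
    have hexp1 : S.card * (sG + m * L) = S.card * sG + S.card * (m * L) := by ring
    have hexp2 : S.card * (sH + k * t + m * k)
        = S.card * sH + S.card * (k * t) + S.card * (m * k) := by ring
    have h2eH : 2 * ecount H = 2 * ecount G + 2 * m := by omega
    linarith [hMain0, hB, hβsum]
  -- final numeric contradiction
  have hstep1 : S.card * (m * (2 * (d + 3) * (k + d + 5))) ≤ S.card * (m * L) :=
    Nat.mul_le_mul_left _ (Nat.mul_le_mul_left _ hL2)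
  have hc46 : (4 * d + 5) * n ≤ (4 * d + 6) * S.card := by
    have e1 : (k + d + 5) * (4 * d + 6) = (4 * d + 6) * k + (d + 5) * (4 * d + 6) := by ring
    have e2 : (4 * d + 6) * n ≤ (4 * d + 6) * S.card + (4 * d + 6) * k := by
      calc (4 * d + 6) * n ≤ (4 * d + 6) * (S.card + k) := Nat.mul_le_mul_left _ hScard
        _ = (4 * d + 6) * S.card + (4 * d + 6) * k := by ring
    have e3 : (4 * d + 6) * k + (d + 5) * (4 * d + 6) ≤ n := by linarith [hk, e1]
    linarith [e2, e3, Nat.zero_le (d * d)]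
  have hn2c : n ≤ 2 * S.card := by
    have e1 : (4 * d + 6) * S.card ≤ (4 * d + 5) * (2 * S.card) := by
      have h0 : 0 ≤ d * S.card := Nat.zero_le _
      nlinarith [h0]
    have := le_trans hc46 e1
    exact Nat.le_of_mul_le_mul_left this (by omega)
  have hnpos : 1 ≤ n := by
    have : 0 < (k + d + 5) * (4 * d + 6) := Nat.mul_pos (by omega) (by omega)
    omega
  have hcpos : 1 ≤ S.card := by omega
  have he2cd : 2 * ecount G ≤ 2 * (S.card * d) := by
    calc 2 * ecount G ≤ d * n := havg
      _ ≤ d * (2 * S.card) := Nat.mul_le_mul_left _ hn2c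
      _ = 2 * (S.card * d) := by ring
  have F1 : S.card * (k * t) = 2 * (S.card * k * d) + 2 * (S.card * k) + S.card * k * m := by
    rw [htdef]; ring
  have F2 : S.card * (m * (2 * (d + 3) * (k + d + 5)))
      = 2 * (S.card * m * k * d) + 6 * (S.card * m * k) + 2 * (S.card * m * d * d)
        + 16 * (S.card * m * d) + 30 * (S.card * m) := by ring
  have F3 : (2 * (S.card * k) + 2 * (S.card * k * d)) * 1
      ≤ (2 * (S.card * k) + 2 * (S.card * k * d)) * m := Nat.mul_le_mul_left _ hm1
  have F5 : 1 * m ≤ S.card * m := Nat.mul_le_mul_right m hcpos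
  have F6 : 1 * 1 ≤ S.card * m := Nat.mul_le_mul hcpos hm1
  have F7 : (2 * (S.card * d)) * 1 ≤ (2 * (S.card * d)) * m := Nat.mul_le_mul_left _ hm1
  linarith [hMain, hstep1, F1, F2, F3, F5, F6, F7, he2cd,
    Nat.zero_le (S.card * m * d), Nat.zero_le (S.card * m * d * d),
    Nat.zero_le (S.card * k * m), Nat.zero_le (S.card * m * k * d),
    Nat.zero_le (S.card * m * k), Nat.zero_le (S.card * m)]

end Helpers

/-- The number of edges of a graph with average degree at most `d` can be
reconstructed from any deck missing at most `n/(4d+6) - d - 5` cards. -/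
theorem edge_count_reconstruction {n d k : ℕ} (hd : 1 ≤ d) (hn : 3 ≤ n)
    (G H : SimpleGraph (Fin n))
    (havg : 2 * ecount G ≤ d * n)
    (hk : (k + d + 5) * (4 * d + 6) ≤ n)
    (hshare : SharesCards G H (n - k)) :
    ecount G = ecount H := by
  obtain ⟨S, f, hScard, hinj, hiso⟩ := hshare
  have h1 : ecount H ≤ ecount G := core hd hk G H havg S f hScard hinj hiso
  have havgH : 2 * ecount H ≤ d * n := le_trans (by omega) havg
  have hS'card : n - k ≤ (S.image f).card := by
    rw [Finset.card_image_of_injOn hinj]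
    exact hScard
  have : Nonempty (Fin n) := ⟨⟨0, by omega⟩⟩
  set g := Function.invFunOn f ↑S with hgdef
  have hg1 : ∀ w ∈ S.image f, g w ∈ S ∧ f (g w) = w := by
    intro w hw
    obtain ⟨v, hv, rfl⟩ := Finset.mem_image.1 hw
    have hv' : v ∈ (↑S : Set (Fin n)) := Finset.mem_coe.2 hv
    exact ⟨Finset.mem_coe.1 (Function.invFunOn_mem ⟨v, hv', rfl⟩),
      Function.invFunOn_eq ⟨v, hv', rfl⟩⟩
  have hginj : Set.InjOn g ↑(S.image f) := by
    intro w1 h1' w2 h2' he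
    have hg1' := hg1 w1 (Finset.mem_coe.1 h1')
    have hg2' := hg1 w2 (Finset.mem_coe.1 h2')
    rw [← hg1'.2, ← hg2'.2, he]
  have hgiso : ∀ w ∈ S.image f, Nonempty (gcard H w ≃g gcard G (g w)) := by
    intro w hw
    obtain ⟨hgmem, hfw⟩ := hg1 w hw
    obtain ⟨φ⟩ := hiso (g w) hgmem
    rw [hfw] at φ
    exact ⟨φ.symm⟩
  have h2 : ecount G ≤ ecount H :=
    core hd hk H G havgH (S.image f) g hS'card hginj hgiso
  omega
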